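/- arXiv:1904.07729 — 2 statements merged into one kernel-verified Lean document; each statement's English description precedes it below -/
import Mathlib

section
/- In the starting Latin cube L of order n=2t, for every row R_{i1,k1} = {(i1,j,k1) : 1 ≤ j ≤ n} and every index k2 there exists a unique index i2 such that L(i1,x,k1) = L(i2,x,k2) for all x ∈ {1,...,n}; symmetrically, for every i2 there is a unique k2 with this property. -/
/-- The representative of `x` modulo `t` in `{1, ..., t}`. -/
def rmod (t : ℕ) (x : ℤ) : ℤ := (x - 1) % t + 1

/-- The starting Latin cube of order `2*t`. -/
def SLC (t : ℕ) (i j k : ℤ) : ℤ :=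
  if (i ≤ t ∧ j ≤ t ∧ k ≤ t) ∨ ((t:ℤ) < i ∧ (t:ℤ) < k ∧ j ≤ t) then rmod t (j - i + k)
  else if ((t:ℤ) < i ∧ (t:ℤ) < j ∧ k ≤ t) ∨ ((t:ℤ) < j ∧ (t:ℤ) < k ∧ i ≤ t) then rmod t (i - j + k)
  else if (i ≤ t ∧ k ≤ t ∧ (t:ℤ) < j) ∨ ((t:ℤ) < i ∧ (t:ℤ) < j ∧ (t:ℤ) < k) then rmod t (j - i + k) + t
  else rmod t (i - j + k) + t

lemma rmod_mem (t : ℕ) (ht : 1 ≤ t) (a : ℤ) : 1 ≤ rmod t a ∧ rmod t a ≤ t := by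
  unfold rmod
  have h0 : (0:ℤ) < (t:ℤ) := by exact_mod_cast ht
  have h1 : 0 ≤ (a - 1) % t := Int.emod_nonneg _ (by omega)
  have h2 : (a - 1) % t < t := Int.emod_lt_of_pos _ h0
  omega

lemma rmod_dvd (t : ℕ) (a : ℤ) : (t:ℤ) ∣ rmod t a - a := by
  have h : (a - 1) % (t:ℤ) ≡ (a - 1) [ZMOD (t:ℤ)] := Int.emod_emod_of_dvd _ dvd_rfl
  obtain ⟨c, hc⟩ := h.dvd
  exact ⟨-c, by unfold rmod; linear_combination -hc⟩

lemma rmod_congr (t : ℕ) {a b : ℤ} (h : (t:ℤ) ∣ a - b) : rmod t a = rmod t b := by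
  have h' : b ≡ a [ZMOD (t:ℤ)] := Int.modEq_iff_dvd.mpr h
  have := (h'.sub_right 1).symm
  unfold rmod
  rw [this]

lemma rmod_inj (t : ℕ) {a b : ℤ} (h : rmod t a = rmod t b) : (t:ℤ) ∣ a - b := by
  unfold rmod at h
  have h1 : (a - 1) % (t:ℤ) = (b - 1) % (t:ℤ) := by linarith
  have h2 : a - 1 ≡ b - 1 [ZMOD (t:ℤ)] := h1
  obtain ⟨c, hc⟩ := h2.dvd
  exact ⟨-c, by linear_combination -hc⟩

lemma SLC_row (t : ℕ) (i k x : ℤ) :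
    SLC t i x k = if (i ≤ t ∧ k ≤ t) ∨ ((t:ℤ) < i ∧ (t:ℤ) < k) then
        rmod t (x - i + k) + (if x ≤ t then 0 else t)
      else rmod t (i - x + k) + (if x ≤ t then t else 0) := by
  unfold SLC
  split_ifs <;> first | (exfalso; omega) | ring

lemma row_eq_iff (t : ℕ) (ht : 1 ≤ t) (i k i' k' : ℤ) :
    (∀ x ∈ Finset.Icc (1:ℤ) (2*t), SLC t i x k = SLC t i' x k') ↔
      (((i ≤ t ∧ k ≤ t) ∨ ((t:ℤ) < i ∧ (t:ℤ) < k)) ∧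
       ((i' ≤ t ∧ k' ≤ t) ∨ ((t:ℤ) < i' ∧ (t:ℤ) < k')) ∧
       (t:ℤ) ∣ (k - i) - (k' - i')) ∨
      ((¬((i ≤ t ∧ k ≤ t) ∨ ((t:ℤ) < i ∧ (t:ℤ) < k))) ∧
       (¬((i' ≤ t ∧ k' ≤ t) ∨ ((t:ℤ) < i' ∧ (t:ℤ) < k'))) ∧
       (t:ℤ) ∣ (i + k) - (i' + k')) := by
  constructor
  · intro h
    have h1 : (1:ℤ) ∈ Finset.Icc (1:ℤ) (2*t) := by
      simp only [Finset.mem_Icc]; omega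
    have e1 := h 1 h1
    rw [SLC_row, SLC_row] at e1
    have ht1 : (1:ℤ) ≤ t := by exact_mod_cast ht
    by_cases hs : (i ≤ (t:ℤ) ∧ k ≤ t) ∨ ((t:ℤ) < i ∧ (t:ℤ) < k) <;>
      by_cases hs' : (i' ≤ (t:ℤ) ∧ k' ≤ t) ∨ ((t:ℤ) < i' ∧ (t:ℤ) < k')
    · left
      refine ⟨hs, hs', ?_⟩
      simp only [if_pos hs, if_pos hs', if_pos ht1] at e1
      have := rmod_inj t (by linarith : rmod t (1 - i + k) = rmod t (1 - i' + k'))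
      have he : (k - i) - (k' - i') = (1 - i + k) - (1 - i' + k') := by ring
      rw [he]; exact this
    · exfalso
      simp only [if_pos hs, if_neg hs', if_pos ht1] at e1
      have b1 := rmod_mem t ht (1 - i + k)
      have b2 := rmod_mem t ht (i' - 1 + k')
      omega
    · exfalso
      simp only [if_neg hs, if_pos hs', if_pos ht1] at e1
      have b1 := rmod_mem t ht (i - 1 + k)
      have b2 := rmod_mem t ht (1 - i' + k')
      omega
    · right
      refine ⟨hs, hs', ?_⟩
      simp only [if_neg hs, if_neg hs', if_pos ht1] at e1
      have := rmod_inj t (by linarith : rmod t (i - 1 + k) = rmod t (i' - 1 + k'))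
      have he : (i + k) - (i' + k') = (i - 1 + k) - (i' - 1 + k') := by ring
      rw [he]; exact this
  · intro h x hx
    rw [SLC_row, SLC_row]
    rcases h with ⟨hs, hs', hd⟩ | ⟨hs, hs', hd⟩
    · simp only [if_pos hs, if_pos hs']
      have : rmod t (x - i + k) = rmod t (x - i' + k') := by
        apply rmod_congr
        have he : (x - i + k) - (x - i' + k') = (k - i) - (k' - i') := by ring
        rw [he]; exact hd
      rw [this]
    · simp only [if_neg hs, if_neg hs']
      have : rmod t (i - x + k) = rmod t (i' - x + k') := by
        apply rmod_congr
        have he : (i - x + k) - (i' - x + k') = (i + k) - (i' + k') := by ring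
        rw [he]; exact hd
      rw [this]

/-- In the starting Latin cube of order `n = 2t`: for every row `R_{i₁,k₁}` and every
index `k₂` there is a unique `i₂` with `L(i₁,x,k₁) = L(i₂,x,k₂)` for all `x`;
symmetrically, for every `i₂` there is a unique such `k₂`. -/
theorem starting_latin_cube_row_blocks (t : ℕ) (ht : 1 ≤ t)
    (i₁ k₁ : ℤ) (hi₁ : i₁ ∈ Finset.Icc (1:ℤ) (2*t)) (hk₁ : k₁ ∈ Finset.Icc (1:ℤ) (2*t)) :
    (∀ k₂ ∈ Finset.Icc (1:ℤ) (2*t),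
      ∃! i₂, i₂ ∈ Finset.Icc (1:ℤ) (2*t) ∧
        ∀ x ∈ Finset.Icc (1:ℤ) (2*t), SLC t i₁ x k₁ = SLC t i₂ x k₂) ∧
    (∀ i₂ ∈ Finset.Icc (1:ℤ) (2*t),
      ∃! k₂, k₂ ∈ Finset.Icc (1:ℤ) (2*t) ∧
        ∀ x ∈ Finset.Icc (1:ℤ) (2*t), SLC t i₁ x k₁ = SLC t i₂ x k₂) := by
  simp only [Finset.mem_Icc] at hi₁ hk₁
  have ht' : (1:ℤ) ≤ t := by exact_mod_cast ht
  constructor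
  · intro k₂ hk₂
    simp only [Finset.mem_Icc] at hk₂
    by_cases hs : (i₁ ≤ (t:ℤ) ∧ k₁ ≤ (t:ℤ)) ∨ ((t:ℤ) < i₁ ∧ (t:ℤ) < k₁)
    · -- same-side row type
      set c := i₁ - k₁ + k₂ with hc
      set h0 := (if k₂ ≤ (t:ℤ) then (0:ℤ) else (t:ℤ)) with hh0
      set w := rmod t c + h0 with hw
      have hb := rmod_mem t ht c
      have hh0b : (h0 = 0 ∧ k₂ ≤ (t:ℤ)) ∨ (h0 = t ∧ (t:ℤ) < k₂) := by
        rw [hh0]; split_ifs with h <;> omega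
      have hwmem : 1 ≤ w ∧ w ≤ 2*(t:ℤ) := by omega
      have hwsame : (w ≤ (t:ℤ) ∧ k₂ ≤ (t:ℤ)) ∨ ((t:ℤ) < w ∧ (t:ℤ) < k₂) := by omega
      have hwd : (t:ℤ) ∣ (k₁ - i₁) - (k₂ - w) := by
        have d1 := rmod_dvd t c
        have d2 : (t:ℤ) ∣ h0 := by rcases hh0b with ⟨h,_⟩|⟨h,_⟩ <;> simp [h]
        have he : (k₁ - i₁) - (k₂ - w) = (rmod t c - c) + h0 := by rw [hw, hc]; ring
        rw [he]; exact dvd_add d1 d2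
      have hwrow : ∀ x ∈ Finset.Icc (1:ℤ) (2*t), SLC t i₁ x k₁ = SLC t w x k₂ :=
        (row_eq_iff t ht i₁ k₁ w k₂).mpr (Or.inl ⟨hs, hwsame, hwd⟩)
      refine ⟨w, ⟨Finset.mem_Icc.mpr ⟨hwmem.1, hwmem.2⟩, hwrow⟩, ?_⟩
      rintro y ⟨hymem, hyrow⟩
      simp only [Finset.mem_Icc] at hymem
      rcases (row_eq_iff t ht i₁ k₁ y k₂).mp hyrow with ⟨_, hsy, hdy⟩ | ⟨hns, _, _⟩
      · have hdiff : (t:ℤ) ∣ y - w := by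
          have := dvd_sub hdy hwd
          have he : ((k₁ - i₁) - (k₂ - y)) - ((k₁ - i₁) - (k₂ - w)) = y - w := by ring
          rwa [he] at this
        have h0' : y - w = 0 := Int.eq_zero_of_abs_lt_dvd hdiff
          (abs_lt.mpr ⟨by omega, by omega⟩)
        omega
      · exact absurd hs hns
    · -- different-side row type
      set c := i₁ + k₁ - k₂ with hc
      set h0 := (if k₂ ≤ (t:ℤ) then (t:ℤ) else (0:ℤ)) with hh0
      set w := rmod t c + h0 with hw
      have hb := rmod_mem t ht c
      have hh0b : (h0 = t ∧ k₂ ≤ (t:ℤ)) ∨ (h0 = 0 ∧ (t:ℤ) < k₂) := by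
        rw [hh0]; split_ifs with h <;> omega
      have hwmem : 1 ≤ w ∧ w ≤ 2*(t:ℤ) := by omega
      have hwsame : ¬((w ≤ (t:ℤ) ∧ k₂ ≤ (t:ℤ)) ∨ ((t:ℤ) < w ∧ (t:ℤ) < k₂)) := by omega
      have hwd : (t:ℤ) ∣ (i₁ + k₁) - (w + k₂) := by
        have d1 := rmod_dvd t c
        have d2 : (t:ℤ) ∣ h0 := by rcases hh0b with ⟨h,_⟩|⟨h,_⟩ <;> simp [h]
        have he : (i₁ + k₁) - (w + k₂) = -((rmod t c - c) + h0) := by rw [hw, hc]; ring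
        rw [he]; exact dvd_neg.mpr (dvd_add d1 d2)
      have hwrow : ∀ x ∈ Finset.Icc (1:ℤ) (2*t), SLC t i₁ x k₁ = SLC t w x k₂ :=
        (row_eq_iff t ht i₁ k₁ w k₂).mpr (Or.inr ⟨hs, hwsame, hwd⟩)
      refine ⟨w, ⟨Finset.mem_Icc.mpr ⟨hwmem.1, hwmem.2⟩, hwrow⟩, ?_⟩
      rintro y ⟨hymem, hyrow⟩
      simp only [Finset.mem_Icc] at hymem
      rcases (row_eq_iff t ht i₁ k₁ y k₂).mp hyrow with ⟨hns, _, _⟩ | ⟨_, hsy, hdy⟩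
      · exact absurd hns hs
      · have hdiff : (t:ℤ) ∣ y - w := by
          have := dvd_sub hwd hdy
          have he : ((i₁ + k₁) - (w + k₂)) - ((i₁ + k₁) - (y + k₂)) = y - w := by ring
          rwa [he] at this
        have h0' : y - w = 0 := Int.eq_zero_of_abs_lt_dvd hdiff
          (abs_lt.mpr ⟨by omega, by omega⟩)
        omega
  · intro i₂ hi₂
    simp only [Finset.mem_Icc] at hi₂
    by_cases hs : (i₁ ≤ (t:ℤ) ∧ k₁ ≤ (t:ℤ)) ∨ ((t:ℤ) < i₁ ∧ (t:ℤ) < k₁)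
    · set c := k₁ - i₁ + i₂ with hc
      set h0 := (if i₂ ≤ (t:ℤ) then (0:ℤ) else (t:ℤ)) with hh0
      set w := rmod t c + h0 with hw
      have hb := rmod_mem t ht c
      have hh0b : (h0 = 0 ∧ i₂ ≤ (t:ℤ)) ∨ (h0 = t ∧ (t:ℤ) < i₂) := by
        rw [hh0]; split_ifs with h <;> omega
      have hwmem : 1 ≤ w ∧ w ≤ 2*(t:ℤ) := by omega
      have hwsame : (i₂ ≤ (t:ℤ) ∧ w ≤ (t:ℤ)) ∨ ((t:ℤ) < i₂ ∧ (t:ℤ) < w) := by omega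
      have hwd : (t:ℤ) ∣ (k₁ - i₁) - (w - i₂) := by
        have d1 := rmod_dvd t c
        have d2 : (t:ℤ) ∣ h0 := by rcases hh0b with ⟨h,_⟩|⟨h,_⟩ <;> simp [h]
        have he : (k₁ - i₁) - (w - i₂) = -((rmod t c - c) + h0) := by rw [hw, hc]; ring
        rw [he]; exact dvd_neg.mpr (dvd_add d1 d2)
      have hwrow : ∀ x ∈ Finset.Icc (1:ℤ) (2*t), SLC t i₁ x k₁ = SLC t i₂ x w :=
        (row_eq_iff t ht i₁ k₁ i₂ w).mpr (Or.inl ⟨hs, hwsame, hwd⟩)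
      refine ⟨w, ⟨Finset.mem_Icc.mpr ⟨hwmem.1, hwmem.2⟩, hwrow⟩, ?_⟩
      rintro y ⟨hymem, hyrow⟩
      simp only [Finset.mem_Icc] at hymem
      rcases (row_eq_iff t ht i₁ k₁ i₂ y).mp hyrow with ⟨_, hsy, hdy⟩ | ⟨hns, _, _⟩
      · have hdiff : (t:ℤ) ∣ y - w := by
          have := dvd_sub hwd hdy
          have he : ((k₁ - i₁) - (w - i₂)) - ((k₁ - i₁) - (y - i₂)) = y - w := by ring
          rwa [he] at this
        have h0' : y - w = 0 := Int.eq_zero_of_abs_lt_dvd hdiff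
          (abs_lt.mpr ⟨by omega, by omega⟩)
        omega
      · exact absurd hs hns
    · set c := i₁ + k₁ - i₂ with hc
      set h0 := (if i₂ ≤ (t:ℤ) then (t:ℤ) else (0:ℤ)) with hh0
      set w := rmod t c + h0 with hw
      have hb := rmod_mem t ht c
      have hh0b : (h0 = t ∧ i₂ ≤ (t:ℤ)) ∨ (h0 = 0 ∧ (t:ℤ) < i₂) := by
        rw [hh0]; split_ifs with h <;> omega
      have hwmem : 1 ≤ w ∧ w ≤ 2*(t:ℤ) := by omega
      have hwsame : ¬((i₂ ≤ (t:ℤ) ∧ w ≤ (t:ℤ)) ∨ ((t:ℤ) < i₂ ∧ (t:ℤ) < w)) := by omega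
      have hwd : (t:ℤ) ∣ (i₁ + k₁) - (i₂ + w) := by
        have d1 := rmod_dvd t c
        have d2 : (t:ℤ) ∣ h0 := by rcases hh0b with ⟨h,_⟩|⟨h,_⟩ <;> simp [h]
        have he : (i₁ + k₁) - (i₂ + w) = -((rmod t c - c) + h0) := by rw [hw, hc]; ring
        rw [he]; exact dvd_neg.mpr (dvd_add d1 d2)
      have hwrow : ∀ x ∈ Finset.Icc (1:ℤ) (2*t), SLC t i₁ x k₁ = SLC t i₂ x w :=
        (row_eq_iff t ht i₁ k₁ i₂ w).mpr (Or.inr ⟨hs, hwsame, hwd⟩)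
      refine ⟨w, ⟨Finset.mem_Icc.mpr ⟨hwmem.1, hwmem.2⟩, hwrow⟩, ?_⟩
      rintro y ⟨hymem, hyrow⟩
      simp only [Finset.mem_Icc] at hymem
      rcases (row_eq_iff t ht i₁ k₁ i₂ y).mp hyrow with ⟨hns, _, _⟩ | ⟨_, hsy, hdy⟩
      · exact absurd hns hs
      · have hdiff : (t:ℤ) ∣ y - w := by
          have := dvd_sub hwd hdy
          have he : ((i₁ + k₁) - (i₂ + w)) - ((i₁ + k₁) - (i₂ + y)) = y - w := by ring
          rwa [he] at this
        have h0' : y - w = 0 := Int.eq_zero_of_abs_lt_dvd hdiff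
          (abs_lt.mpr ⟨by omega, by omega⟩)
        omega
end

section
/- In the starting Latin cube L of order n=2t, fix a symbol b and let B1 be the set of (row, column)-coordinate pairs (i,j) with L(i,j,1) = b. Then for every file layer k, all cells (i,j,k) with (i,j) ∈ B1 contain the same symbol. -/
lemma rmod_bdd (t : ℕ) (ht : 1 ≤ t) (x : ℤ) : 1 ≤ rmod t x ∧ rmod t x ≤ t := by
  unfold rmod
  have h0 : (0:ℤ) < t := by exact_mod_cast ht
  have h1 : 0 ≤ (x - 1) % t := Int.emod_nonneg _ (by omega)
  have h2 : (x - 1) % t < t := Int.emod_lt_of_pos _ h0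
  omega

lemma rmod_eq (t : ℕ) (x y c : ℤ) (h : x = y + t * c) : rmod t x = rmod t y := by
  unfold rmod
  congr 1
  subst h
  rw [show y + (t:ℤ) * c - 1 = (y - 1) + (t:ℤ) * c by ring, Int.add_mul_emod_self_left]

lemma SLC_eval1 (t : ℕ) (i j k : ℤ)
    (h : (i ≤ t ∧ j ≤ t ∧ k ≤ t) ∨ ((t:ℤ) < i ∧ (t:ℤ) < k ∧ j ≤ t)) :
    SLC t i j k = rmod t (j - i + k) := by unfold SLC; rw [if_pos h]

lemma SLC_eval2 (t : ℕ) (i j k : ℤ)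
    (h1 : ¬((i ≤ t ∧ j ≤ t ∧ k ≤ t) ∨ ((t:ℤ) < i ∧ (t:ℤ) < k ∧ j ≤ t)))
    (h2 : ((t:ℤ) < i ∧ (t:ℤ) < j ∧ k ≤ t) ∨ ((t:ℤ) < j ∧ (t:ℤ) < k ∧ i ≤ t)) :
    SLC t i j k = rmod t (i - j + k) := by unfold SLC; rw [if_neg h1, if_pos h2]

lemma SLC_eval3 (t : ℕ) (i j k : ℤ)
    (h1 : ¬((i ≤ t ∧ j ≤ t ∧ k ≤ t) ∨ ((t:ℤ) < i ∧ (t:ℤ) < k ∧ j ≤ t)))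
    (h2 : ¬(((t:ℤ) < i ∧ (t:ℤ) < j ∧ k ≤ t) ∨ ((t:ℤ) < j ∧ (t:ℤ) < k ∧ i ≤ t)))
    (h3 : (i ≤ t ∧ k ≤ t ∧ (t:ℤ) < j) ∨ ((t:ℤ) < i ∧ (t:ℤ) < j ∧ (t:ℤ) < k)) :
    SLC t i j k = rmod t (j - i + k) + t := by unfold SLC; rw [if_neg h1, if_neg h2, if_pos h3]

lemma SLC_eval4 (t : ℕ) (i j k : ℤ)
    (h1 : ¬((i ≤ t ∧ j ≤ t ∧ k ≤ t) ∨ ((t:ℤ) < i ∧ (t:ℤ) < k ∧ j ≤ t)))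
    (h2 : ¬(((t:ℤ) < i ∧ (t:ℤ) < j ∧ k ≤ t) ∨ ((t:ℤ) < j ∧ (t:ℤ) < k ∧ i ≤ t)))
    (h3 : ¬((i ≤ t ∧ k ≤ t ∧ (t:ℤ) < j) ∨ ((t:ℤ) < i ∧ (t:ℤ) < j ∧ (t:ℤ) < k))) :
    SLC t i j k = rmod t (i - j + k) + t := by unfold SLC; rw [if_neg h1, if_neg h2, if_neg h3]

lemma SLC_main (t : ℕ) (ht : 1 ≤ t) (i j k : ℤ)
    (hi1 : 1 ≤ i) (hi2 : i ≤ 2*t) (hj1 : 1 ≤ j) (hj2 : j ≤ 2*t)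
    (hk1 : 1 ≤ k) (hk2 : k ≤ 2*t) :
    SLC t i j k =
      if SLC t i j 1 ≤ t then
        (if k ≤ t then rmod t (SLC t i j 1 - 1 + k) else rmod t (1 - SLC t i j 1 + k) + t)
      else
        (if k ≤ t then rmod t (SLC t i j 1 - 1 + k) + t else rmod t (1 - SLC t i j 1 + k)) := by
  have ht' : (1:ℤ) ≤ t := by exact_mod_cast ht
  by_cases hi : i ≤ (t:ℤ) <;> by_cases hj : j ≤ (t:ℤ) <;> by_cases hk : k ≤ (t:ℤ)
  · -- A, k ≤ t
    rw [SLC_eval1 t i j 1 (by omega), SLC_eval1 t i j k (by omega),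
      if_pos (rmod_bdd t ht (j - i + 1)).2, if_pos hk]
    exact rmod_eq t _ _ ((j - i + 1 - 1) / t) (by simp only [rmod]; rw [Int.emod_def]; ring)
  · -- A, k > t
    rw [SLC_eval1 t i j 1 (by omega), SLC_eval4 t i j k (by omega) (by omega) (by omega),
      if_pos (rmod_bdd t ht (j - i + 1)).2, if_neg hk, add_left_inj]
    exact rmod_eq t _ _ (-((j - i + 1 - 1) / t)) (by simp only [rmod]; rw [Int.emod_def]; ring)
  · -- B, k ≤ t
    rw [SLC_eval3 t i j 1 (by omega) (by omega) (by omega),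
      SLC_eval3 t i j k (by omega) (by omega) (by omega),
      if_neg (by have := rmod_bdd t ht (j - i + 1); omega), if_pos hk, add_left_inj]
    exact rmod_eq t _ _ ((j - i + 1 - 1) / t - 1) (by simp only [rmod]; rw [Int.emod_def]; ring)
  · -- B, k > t
    rw [SLC_eval3 t i j 1 (by omega) (by omega) (by omega),
      SLC_eval2 t i j k (by omega) (by omega),
      if_neg (by have := rmod_bdd t ht (j - i + 1); omega), if_neg hk]
    exact rmod_eq t _ _ (1 - (j - i + 1 - 1) / t) (by simp only [rmod]; rw [Int.emod_def]; ring)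
  · -- C, k ≤ t
    rw [SLC_eval4 t i j 1 (by omega) (by omega) (by omega),
      SLC_eval4 t i j k (by omega) (by omega) (by omega),
      if_neg (by have := rmod_bdd t ht (i - j + 1); omega), if_pos hk, add_left_inj]
    exact rmod_eq t _ _ ((i - j + 1 - 1) / t - 1) (by simp only [rmod]; rw [Int.emod_def]; ring)
  · -- C, k > t
    rw [SLC_eval4 t i j 1 (by omega) (by omega) (by omega),
      SLC_eval1 t i j k (by omega),
      if_neg (by have := rmod_bdd t ht (i - j + 1); omega), if_neg hk]
    exact rmod_eq t _ _ (1 - (i - j + 1 - 1) / t) (by simp only [rmod]; rw [Int.emod_def]; ring)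
  · -- D, k ≤ t
    rw [SLC_eval2 t i j 1 (by omega) (by omega), SLC_eval2 t i j k (by omega) (by omega),
      if_pos (rmod_bdd t ht (i - j + 1)).2, if_pos hk]
    exact rmod_eq t _ _ ((i - j + 1 - 1) / t) (by simp only [rmod]; rw [Int.emod_def]; ring)
  · -- D, k > t
    rw [SLC_eval2 t i j 1 (by omega) (by omega),
      SLC_eval3 t i j k (by omega) (by omega) (by omega),
      if_pos (rmod_bdd t ht (i - j + 1)).2, if_neg hk, add_left_inj]
    exact rmod_eq t _ _ (-((i - j + 1 - 1) / t)) (by simp only [rmod]; rw [Int.emod_def]; ring)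

/-- In the starting Latin cube of order `n = 2t`: fix a symbol `b`, and let `B₁` be the
set of (row,column) pairs `(i,j)` with `L(i,j,1) = b`. Then for every file layer `k`,
all cells `(i,j,k)` with `(i,j) ∈ B₁` contain the same symbol. -/
theorem starting_latin_cube_symbol_file_block (t : ℕ) (ht : 1 ≤ t)
    (b : ℤ) (hb : b ∈ Finset.Icc (1:ℤ) (2*t)) :
    ∀ k ∈ Finset.Icc (1:ℤ) (2*t),
      ∀ i ∈ Finset.Icc (1:ℤ) (2*t), ∀ j ∈ Finset.Icc (1:ℤ) (2*t),
      ∀ i' ∈ Finset.Icc (1:ℤ) (2*t), ∀ j' ∈ Finset.Icc (1:ℤ) (2*t),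
      SLC t i j 1 = b → SLC t i' j' 1 = b → SLC t i j k = SLC t i' j' k := by
  intro k hk i hi j hj i' hi' j' hj' h1 h2
  simp only [Finset.mem_Icc] at hk hi hj hi' hj'
  rw [SLC_main t ht i j k hi.1 hi.2 hj.1 hj.2 hk.1 hk.2,
    SLC_main t ht i' j' k hi'.1 hi'.2 hj'.1 hj'.2 hk.1 hk.2, h1, h2]
end
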